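/- For every b > 0 and every n ∈ ℕ, the function φₙ satisfies the harmonic oscillator eigenvalue equation −φₙ''(x) + b² x² φₙ(x) = b(2n+1) φₙ(x) for all x ∈ ℝ. -/

import Mathlib

open Real

/-- The `n`-th physicists' Hermite polynomial (as a function),
`Hₙ(x) = (−1)ⁿ e^{x²} (dⁿ/dxⁿ) e^{−x²}`. -/
noncomputable def physHermite (n : ℕ) (x : ℝ) : ℝ :=
  (-1 : ℝ) ^ n * Real.exp (x ^ 2) * iteratedDeriv n (fun y => Real.exp (-(y ^ 2))) x

/-- The Landau eigenfunctions
`φₙ(x) = aₙ b^{1/4} Hₙ(√b x) e^{−b x²/2}` with `aₙ = (2ⁿ n!)^{−1/2} π^{−1/4}`. -/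
noncomputable def landauPhi (b : ℝ) (n : ℕ) (x : ℝ) : ℝ :=
  (Real.sqrt (2 ^ n * Nat.factorial n))⁻¹ * (π ^ ((1 : ℝ) / 4))⁻¹ *
    b ^ ((1 : ℝ) / 4) * physHermite n (Real.sqrt b * x) * Real.exp (-(b * x ^ 2) / 2)

open Polynomial in
/-- Physicists' Hermite polynomials via the Rodrigues recurrence. -/
noncomputable def PH : ℕ → Polynomial ℝ
  | 0 => 1
  | n + 1 => Polynomial.C 2 * Polynomial.X * PH n - Polynomial.derivative (PH n)

lemma PH_succ (n : ℕ) : PH (n + 1) =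
    Polynomial.C 2 * Polynomial.X * PH n - Polynomial.derivative (PH n) := rfl

lemma derivPH (n : ℕ) :
    Polynomial.derivative (PH (n + 1)) = Polynomial.C (2 * (n + 1) : ℝ) * PH n := by
  induction n with
  | zero => simp [PH]
  | succ m ih =>
      have hC : (Polynomial.C (2 * ((m : ℝ) + 1 + 1))) =
          Polynomial.C 2 + Polynomial.C (2 * ((m : ℝ) + 1)) := by
        rw [← Polynomial.C_add]; ring_nf
      rw [PH_succ (m + 1), map_sub, Polynomial.derivative_mul, Polynomial.derivative_mul, ih,
        Polynomial.derivative_C_mul]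
      simp only [Polynomial.derivative_C, Polynomial.derivative_X]
      push_cast
      rw [hC, PH_succ m]
      ring

lemma odePH (n : ℕ) :
    Polynomial.derivative (Polynomial.derivative (PH n)) =
      Polynomial.C 2 * Polynomial.X * Polynomial.derivative (PH n)
        - Polynomial.C (2 * n : ℝ) * PH n := by
  cases n with
  | zero => simp [PH]
  | succ m =>
      rw [derivPH, Polynomial.derivative_C_mul, PH_succ m]
      push_cast
      ring

lemma hasDerivAt_poly_gauss (Q : Polynomial ℝ) (x : ℝ) :
    HasDerivAt (fun y => Q.eval y * Real.exp (-(y ^ 2)))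
      ((Q.derivative.eval x - 2 * x * Q.eval x) * Real.exp (-(x ^ 2))) x := by
  have h1 : HasDerivAt (fun y : ℝ => Q.eval y) (Q.derivative.eval x) x := Q.hasDerivAt x
  have h2 : HasDerivAt (fun y : ℝ => Real.exp (-(y ^ 2)))
      (Real.exp (-(x ^ 2)) * (-(2 * x))) x := by
    have h : HasDerivAt (fun y : ℝ => -(y ^ 2)) (-(2 * x)) x := by
      simpa [Pi.neg_def] using ((hasDerivAt_pow 2 x).neg)
    exact h.exp
  have h : HasDerivAt (fun y => Q.eval y * Real.exp (-(y ^ 2))) _ x := h1.mul h2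
  convert h using 1
  ring

lemma iteratedDeriv_gauss (n : ℕ) :
    iteratedDeriv n (fun y => Real.exp (-(y ^ 2))) =
      fun x => (-1 : ℝ) ^ n * ((PH n).eval x * Real.exp (-(x ^ 2))) := by
  induction n with
  | zero => funext x; simp [PH]
  | succ m ih =>
      rw [iteratedDeriv_succ, ih]
      funext x
      have h : HasDerivAt (fun y => (-1 : ℝ) ^ m * ((PH m).eval y * Real.exp (-(y ^ 2))))
          ((-1 : ℝ) ^ m * (((PH m).derivative.eval x - 2 * x * (PH m).eval x)
            * Real.exp (-(x ^ 2)))) x :=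
        (hasDerivAt_poly_gauss (PH m) x).const_mul _
      rw [h.deriv, PH_succ m]
      simp only [Polynomial.eval_sub, Polynomial.eval_mul, Polynomial.eval_C,
        Polynomial.eval_X, pow_succ]
      ring

lemma physHermite_eq (n : ℕ) (x : ℝ) : physHermite n x = (PH n).eval x := by
  rw [physHermite, iteratedDeriv_gauss]
  have h1 : ((-1 : ℝ) ^ n) * ((-1 : ℝ) ^ n) = 1 := by
    rw [← mul_pow]; norm_num
  have h2 : Real.exp (x ^ 2) * Real.exp (-(x ^ 2)) = 1 := by
    rw [← Real.exp_add]; simp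
  calc (-1 : ℝ) ^ n * Real.exp (x ^ 2) * ((-1 : ℝ) ^ n * ((PH n).eval x * Real.exp (-(x ^ 2))))
      = (((-1 : ℝ) ^ n) * ((-1 : ℝ) ^ n)) * (PH n).eval x
          * (Real.exp (x ^ 2) * Real.exp (-(x ^ 2))) := by ring
    _ = (PH n).eval x := by rw [h1, h2]; ring

lemma deriv_poly_gauss2 (b : ℝ) (hb : 0 ≤ b) (c : ℝ) (Q : Polynomial ℝ) :
    deriv (fun x => c * (Q.eval (Real.sqrt b * x) * Real.exp (-(b * x ^ 2) / 2)))
      = fun x => c * ((Polynomial.C (Real.sqrt b) *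
          (Polynomial.derivative Q - Polynomial.X * Q)).eval (Real.sqrt b * x) *
          Real.exp (-(b * x ^ 2) / 2)) := by
  funext x
  have hbb : Real.sqrt b * Real.sqrt b = b := Real.mul_self_sqrt hb
  have h1 : HasDerivAt (fun y : ℝ => Q.eval (Real.sqrt b * y))
      (Q.derivative.eval (Real.sqrt b * x) * Real.sqrt b) x := by
    have hin : HasDerivAt (fun y : ℝ => Real.sqrt b * y) (Real.sqrt b) x := by
      simpa using (hasDerivAt_id x).const_mul (Real.sqrt b)
    exact (Q.hasDerivAt (Real.sqrt b * x)).comp x hin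
  have h2 : HasDerivAt (fun y : ℝ => Real.exp (-(b * y ^ 2) / 2))
      (Real.exp (-(b * x ^ 2) / 2) * (-(b * x))) x := by
    have hin : HasDerivAt (fun y : ℝ => -(b * y ^ 2) / 2) (-(b * x)) x := by
      have h : HasDerivAt (fun y : ℝ => y ^ 2) (2 * x) x := by simpa using hasDerivAt_pow 2 x
      have h' : HasDerivAt (fun y : ℝ => -(b * y ^ 2) / 2) _ x := ((h.const_mul b).neg).div_const 2
      convert h' using 1
      ring
    exact hin.exp
  have h : HasDerivAt (fun x => c * (Q.eval (Real.sqrt b * x) * Real.exp (-(b * x ^ 2) / 2))) _ x :=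
    ((h1.mul h2).const_mul c)
  rw [h.deriv]
  simp only [Polynomial.eval_mul, Polynomial.eval_sub, Polynomial.eval_C, Polynomial.eval_X]
  linear_combination c * Polynomial.eval (Real.sqrt b * x) Q *
    Real.exp (-(b * x ^ 2) / 2) * x * hbb
/-- For every `b > 0` and `n ∈ ℕ`, the function `φₙ` satisfies the harmonic oscillator
eigenvalue equation `−φₙ'' + b² x² φₙ = b(2n+1) φₙ`. -/
theorem landauPhi_harmonic_oscillator (b : ℝ) (hb : 0 < b) (n : ℕ) (x : ℝ) :
    -(deriv (deriv (landauPhi b n)) x) + b ^ 2 * x ^ 2 * landauPhi b n x =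
      b * (2 * n + 1) * landauPhi b n x := by
  obtain ⟨s, hs, hss⟩ : ∃ s, Real.sqrt b = s ∧ s * s = b :=
    ⟨Real.sqrt b, rfl, Real.mul_self_sqrt hb.le⟩
  set c : ℝ := (Real.sqrt (2 ^ n * Nat.factorial n))⁻¹ * (π ^ ((1 : ℝ) / 4))⁻¹ *
    b ^ ((1 : ℝ) / 4) with hc
  set Q := PH n with hQ
  have hφ : landauPhi b n =
      fun x => c * (Q.eval (Real.sqrt b * x) * Real.exp (-(b * x ^ 2) / 2)) := by
    funext y
    rw [landauPhi, physHermite_eq]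
    ring
  rw [hφ, deriv_poly_gauss2 b hb.le, deriv_poly_gauss2 b hb.le, hs]
  have hode := odePH n
  have hodeE : (Polynomial.derivative (Polynomial.derivative Q)).eval (s * x) =
      2 * (s * x) * (Polynomial.derivative Q).eval (s * x)
        - 2 * n * Q.eval (s * x) := by
    rw [← hQ] at hode
    rw [hode]; simp
  simp only [Polynomial.derivative_mul, Polynomial.derivative_C, Polynomial.derivative_sub,
    Polynomial.derivative_X, one_mul, Polynomial.eval_mul, Polynomial.eval_sub,
    Polynomial.eval_add, Polynomial.eval_C, Polynomial.eval_X, Polynomial.eval_one, zero_mul,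
    zero_add]
  rw [hodeE, hc, ← hss]
  ring
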